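/- Let a > 1/2 and μ ≥ 0, and set d = 1/2 − a + √(μ/2 + (a − 1/2)²), ν = d + a + 1/2, and α = (1 + 2a + 2ν)/4. For all t > 0, x > 0, and λ ≥ 0, with p(t,x,y) = (y/t) (y/x)^{a−1/2} exp( −(x²+y²)/(2t) ) I_{ν−1}(xy/t), one has ∫_0^∞ e^{−λ y²} p(t,x,y) dy = e^{−x²/(2t)} (x²/(2t))^{(2ν−2a−1)/4} · Γ(α) ₁F₁(α, ν, x²/(2t + 4t²λ)) / ( Γ(ν) (1 + 2tλ)^α ). -/
import Mathlib


open Real MeasureTheory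

/-- The modified Bessel function of the first kind,
`I_ν(z) = ∑_{k=0}^∞ (z/2)^{2k+ν} / (k! Γ(k+ν+1))`. -/
noncomputable def besselI (ν z : ℝ) : ℝ :=
  ∑' k : ℕ, (z / 2) ^ (2 * (k : ℝ) + ν) / ((Nat.factorial k : ℝ) * Real.Gamma ((k : ℝ) + ν + 1))

/-- Kummer's confluent hypergeometric function
`₁F₁(a,b,z) = ∑_{k=0}^∞ ((a)_k/(b)_k) zᵏ/k!`. -/
noncomputable def hyp1F1 (a b z : ℝ) : ℝ :=
  ∑' k : ℕ, ((∏ i ∈ Finset.range k, (a + (i : ℝ))) / (∏ i ∈ Finset.range k, (b + (i : ℝ))))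
      * z ^ k / (Nat.factorial k : ℝ)

lemma gamma_nat_add_prod (z : ℝ) (hz : 0 < z) (k : ℕ) :
    Real.Gamma ((k : ℝ) + z) = Real.Gamma z * ∏ i ∈ Finset.range k, (z + (i : ℝ)) := by
  induction k with
  | zero => simp
  | succ n ih =>
      have hnz : (n : ℝ) + z ≠ 0 := by positivity
      rw [Finset.prod_range_succ, show ((n + 1 : ℕ) : ℝ) + z = ((n : ℝ) + z) + 1 by
        push_cast; ring, Real.Gamma_add_one hnz, ih]
      ring

/-- The expectation
`E_x(exp(-λX_t² - (μ/4)∫_0^t X_s^{-2} ds))` for the Bessel process, computed by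
integrating `e^{-λy²}` against the fundamental solution (3.22). -/
theorem stmt_8 (a μ d ν α t x lam : ℝ) (ha : 1 / 2 < a) (hμ : 0 ≤ μ)
    (hd : d = 1 / 2 - a + Real.sqrt (μ / 2 + (a - 1 / 2) ^ 2))
    (hν : ν = d + a + 1 / 2)
    (hα : α = (1 + 2 * a + 2 * ν) / 4)
    (ht : 0 < t) (hx : 0 < x) (hlam : 0 ≤ lam)
    (p : ℝ → ℝ)
    (hp : ∀ y, p y = (y / t) * (y / x) ^ (a - 1 / 2)
        * Real.exp (-(x ^ 2 + y ^ 2) / (2 * t)) * besselI (ν - 1) (x * y / t)) :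
    (∫ y in Set.Ioi (0 : ℝ), Real.exp (-lam * y ^ 2) * p y)
      = Real.exp (-x ^ 2 / (2 * t)) * (x ^ 2 / (2 * t)) ^ ((2 * ν - 2 * a - 1) / 4)
        * (Real.Gamma α * hyp1F1 α ν (x ^ 2 / (2 * t + 4 * t ^ 2 * lam)))
          / (Real.Gamma ν * (1 + 2 * t * lam) ^ α) := by
  -- basic positivity facts
  have hd0 : 0 ≤ d := by
    have h1 : Real.sqrt ((a - 1/2) ^ 2) ≤ Real.sqrt (μ / 2 + (a - 1 / 2) ^ 2) :=
      Real.sqrt_le_sqrt (by nlinarith)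
    rw [Real.sqrt_sq (by linarith : (0:ℝ) ≤ a - 1/2)] at h1
    rw [hd]; linarith
  have hν1 : 1 < ν := by rw [hν]; linarith
  have hν0 : 0 < ν := by linarith
  have hα1 : 1 < α := by rw [hα]; linarith
  have hα0 : 0 < α := by linarith
  have hαν : α ≤ ν := by rw [hα, hν]; linarith
  have h2t : 0 < 2 * t := by linarith
  have hb : 0 < x / (2 * t) := div_pos hx h2t
  have hq : 0 < 1 + 2 * t * lam := by nlinarith
  set c : ℝ := lam + 1 / (2 * t) with hcdef
  have hc : 0 < c := by positivity
  have hcq : c = (1 + 2 * t * lam) / (2 * t) := by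
    rw [hcdef]; field_simp; ring
  set z : ℝ := x ^ 2 / (2 * t + 4 * t ^ 2 * lam) with hzdef
  have hz0 : 0 < z := by
    apply div_pos (by positivity); nlinarith
  have hz' : z = (x / (2 * t)) ^ 2 / c := by
    have h4 : (0:ℝ) < 2 * t + 4 * t ^ 2 * lam := by nlinarith
    rw [hzdef, hcq, div_pow]
    field_simp
    ring
  have hx2t : 0 < x ^ 2 / (2 * t) := by positivity
  set K : ℝ := Real.exp (-x ^ 2 / (2 * t)) * (x ^ 2 / (2 * t)) ^ ((2 * ν - 2 * a - 1) / 4)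
      * Real.Gamma α / (Real.Gamma ν * (1 + 2 * t * lam) ^ α) with hK
  set f : ℕ → ℝ → ℝ := fun k y =>
      (Real.exp (-x ^ 2 / (2 * t)) * (1 / t) * x ^ (1 / 2 - a)
        * (x / (2 * t)) ^ (2 * (k : ℝ) + ν - 1)
        / ((Nat.factorial k : ℝ) * Real.Gamma ((k : ℝ) + ν)))
      * (y ^ (2 * (k : ℝ) + ν + a - 1 / 2) * Real.exp (-c * y ^ 2)) with hfdef
  have hGν : ∀ k : ℕ, 0 < Real.Gamma ((k : ℝ) + ν) :=
    fun k => Real.Gamma_pos_of_pos (by positivity)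
  have hGα : ∀ k : ℕ, 0 < Real.Gamma ((k : ℝ) + α) :=
    fun k => Real.Gamma_pos_of_pos (by positivity)
  -- Step A: pointwise identity on Ioi 0
  have hpt : ∀ y ∈ Set.Ioi (0 : ℝ), Real.exp (-lam * y ^ 2) * p y = ∑' k, f k y := by
    intro y hy
    have hy0 : (0:ℝ) < y := hy
    rw [hp y, besselI]
    simp only [← tsum_mul_left]
    refine tsum_congr fun k => ?_
    have e1 : (x * y / t / 2) ^ (2 * (k:ℝ) + (ν - 1))
        = (x / (2 * t)) ^ (2 * (k:ℝ) + ν - 1) * y ^ (2 * (k:ℝ) + ν - 1) := by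
      rw [show x * y / t / 2 = (x / (2 * t)) * y by ring,
        Real.mul_rpow hb.le hy0.le, show 2 * (k:ℝ) + (ν - 1) = 2 * (k:ℝ) + ν - 1 by ring]
    have e2 : (y / x) ^ (a - 1/2) = y ^ (a - 1/2) * x ^ (1/2 - a) := by
      rw [Real.div_rpow hy0.le hx.le, div_eq_mul_inv, ← Real.rpow_neg hx.le,
        show -(a - 1/2) = 1/2 - a by ring]
    have e3 : y ^ (2 * (k:ℝ) + ν + a - 1/2)
        = y * (y ^ (a - 1/2) * y ^ (2 * (k:ℝ) + ν - 1)) := by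
      rw [← Real.rpow_add hy0, show a - 1/2 + (2 * (k:ℝ) + ν - 1) = 2 * (k:ℝ) + ν + a - 1/2 - 1
        by ring]
      nth_rewrite 1 [show 2 * (k:ℝ) + ν + a - 1/2 = 1 + (2 * (k:ℝ) + ν + a - 1/2 - 1) by ring]
      rw [Real.rpow_add hy0, Real.rpow_one]
    have e4 : Real.exp (-lam * y ^ 2) * Real.exp (-(x ^ 2 + y ^ 2) / (2 * t))
        = Real.exp (-x ^ 2 / (2 * t)) * Real.exp (-c * y ^ 2) := by
      rw [← Real.exp_add, ← Real.exp_add, hcdef]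
      congr 1
      field_simp
      ring
    have e5 : (k:ℝ) + (ν - 1) + 1 = (k:ℝ) + ν := by ring
    simp only [hfdef]
    simp only [e1, e2, e5, e3]
    linear_combination (y / t * (y ^ (a - 1/2) * x ^ (1/2 - a))
      * ((x / (2 * t)) ^ (2 * (k:ℝ) + ν - 1) * y ^ (2 * (k:ℝ) + ν - 1))
      / ((Nat.factorial k : ℝ) * Real.Gamma ((k:ℝ) + ν))) * e4
  -- Step B: value of each integral
  have hIval : ∀ k : ℕ, (∫ y in Set.Ioi (0 : ℝ), f k y)
      = K * (((∏ i ∈ Finset.range k, (α + (i : ℝ))) / (∏ i ∈ Finset.range k, (ν + (i : ℝ))))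
          * z ^ k / (Nat.factorial k : ℝ)) := by
    intro k
    have hs1 : (-1:ℝ) < 2 * (k:ℝ) + ν + a - 1/2 := by
      have : (0:ℝ) ≤ (k:ℝ) := Nat.cast_nonneg k
      linarith
    have hgamq : (2 * (k:ℝ) + ν + a - 1/2 + 1) / 2 = (k:ℝ) + α := by rw [hα]; ring
    have hint : (∫ y in Set.Ioi (0:ℝ), y ^ (2 * (k:ℝ) + ν + a - 1/2) * Real.exp (-c * y ^ 2))
        = c ^ (-((k:ℝ) + α)) * (1/2) * Real.Gamma ((k:ℝ) + α) := by
      rw [show (∫ y in Set.Ioi (0:ℝ), y ^ (2 * (k:ℝ) + ν + a - 1/2) * Real.exp (-c * y ^ 2))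
          = ∫ y in Set.Ioi (0:ℝ), y ^ (2 * (k:ℝ) + ν + a - 1/2) * Real.exp (-c * y ^ (2:ℝ)) from
        setIntegral_congr_fun measurableSet_Ioi fun y hy => by
          rw [show (2:ℝ) = ((2:ℕ):ℝ) by norm_num, Real.rpow_natCast]]
      rw [integral_rpow_mul_exp_neg_mul_rpow two_pos hs1 hc, neg_div, hgamq]
    have hconst : x ^ (1/2 - a) * (x / (2*t)) ^ (ν - 1) * c ^ (-α) / (2*t)
        = (x ^ 2 / (2*t)) ^ ((2*ν - 2*a - 1)/4) / (1 + 2*t*lam) ^ α := by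
      have e1 : x ^ (1/2 - a) = Real.exp (Real.log x * (1/2 - a)) :=
        Real.rpow_def_of_pos hx _
      have e2 : (x / (2*t)) ^ (ν - 1)
          = Real.exp ((Real.log x - Real.log (2*t)) * (ν - 1)) := by
        rw [Real.rpow_def_of_pos hb, Real.log_div hx.ne' h2t.ne']
      have e3 : c ^ (-α)
          = Real.exp ((Real.log (1 + 2*t*lam) - Real.log (2*t)) * (-α)) := by
        rw [hcq, Real.rpow_def_of_pos (div_pos hq h2t), Real.log_div hq.ne' h2t.ne']
      have e4 : (x ^ 2 / (2*t)) ^ ((2*ν - 2*a - 1)/4)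
          = Real.exp ((2 * Real.log x - Real.log (2*t)) * ((2*ν - 2*a - 1)/4)) := by
        rw [Real.rpow_def_of_pos hx2t, Real.log_div (pow_ne_zero 2 hx.ne') h2t.ne',
          Real.log_pow]
        norm_num
      have e5 : (1 + 2*t*lam) ^ α = Real.exp (Real.log (1 + 2*t*lam) * α) :=
        Real.rpow_def_of_pos hq _
      have e6 : ∀ u : ℝ, u / (2*t) = u * Real.exp (-Real.log (2*t)) := fun u => by
        rw [Real.exp_neg, Real.exp_log h2t, div_eq_mul_inv]
      rw [e1, e2, e3, e4, e5, e6, ← Real.exp_add, ← Real.exp_add, ← Real.exp_add,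
        ← Real.exp_sub, Real.exp_eq_exp, hα]
      ring
    have hbk : (x / (2*t)) ^ (2 * (k:ℝ) + ν - 1)
        = (x / (2*t)) ^ (ν - 1) * ((x / (2*t)) ^ 2) ^ k := by
      rw [show 2 * (k:ℝ) + ν - 1 = (ν - 1) + ((2 * k : ℕ):ℝ) by push_cast; ring,
        Real.rpow_add hb, Real.rpow_natCast, pow_mul]
    have hck : c ^ (-((k:ℝ) + α)) = c ^ (-α) * (c ^ k)⁻¹ := by
      rw [show -((k:ℝ) + α) = -α + -(k:ℝ) by ring, Real.rpow_add hc,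
        Real.rpow_neg hc.le ((k:ℝ)), Real.rpow_natCast]
    have hzk : ((x / (2*t)) ^ 2) ^ k * (c ^ k)⁻¹ = z ^ k := by
      rw [hz']; ring
    simp only [hfdef]
    rw [integral_const_mul, hint, gamma_nat_add_prod ν hν0 k, gamma_nat_add_prod α hα0 k,
      hbk, hck, hK]
    linear_combination ((Real.exp (-x^2/(2*t)) * Real.Gamma α
          * (∏ i ∈ Finset.range k, (α + (i:ℝ)))
          / ((Nat.factorial k : ℝ) * Real.Gamma ν * (∏ i ∈ Finset.range k, (ν + (i:ℝ)))))
        * (((x/(2*t))^2)^k * ((c:ℝ)^k)⁻¹)) * hconst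
      + ((Real.exp (-x^2/(2*t)) * Real.Gamma α
          * (∏ i ∈ Finset.range k, (α + (i:ℝ)))
          / ((Nat.factorial k : ℝ) * Real.Gamma ν * (∏ i ∈ Finset.range k, (ν + (i:ℝ)))))
        * ((x^2/(2*t)) ^ ((2*ν - 2*a - 1)/4) / (1 + 2*t*lam) ^ α)) * hzk
  -- summability of the term values
  have hsum : Summable (fun k : ℕ =>
      ((∏ i ∈ Finset.range k, (α + (i : ℝ))) / (∏ i ∈ Finset.range k, (ν + (i : ℝ))))
        * z ^ k / (Nat.factorial k : ℝ)) := by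
    refine Summable.of_nonneg_of_le (fun k => by positivity) (fun k => ?_)
      (Real.summable_pow_div_factorial z)
    have hPν : 0 < ∏ i ∈ Finset.range k, (ν + (i : ℝ)) :=
      Finset.prod_pos fun i _ => by positivity
    have hle : (∏ i ∈ Finset.range k, (α + (i : ℝ))) ≤ ∏ i ∈ Finset.range k, (ν + (i : ℝ)) :=
      Finset.prod_le_prod (fun i _ => by positivity) (fun i _ => by linarith)
    calc ((∏ i ∈ Finset.range k, (α + (i : ℝ))) / (∏ i ∈ Finset.range k, (ν + (i : ℝ))))
          * z ^ k / (Nat.factorial k : ℝ)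
        ≤ 1 * z ^ k / (Nat.factorial k : ℝ) := by
          gcongr
          exact div_le_one_of_le₀ hle hPν.le
      _ = z ^ k / (Nat.factorial k : ℝ) := by rw [one_mul]
  -- measurability and integrability
  have hmeas : ∀ k : ℕ, AEStronglyMeasurable (f k)
      (volume.restrict (Set.Ioi (0 : ℝ))) := by
    intro k
    apply Measurable.aestronglyMeasurable
    fun_prop
  have hInt : ∀ k : ℕ, IntegrableOn (f k) (Set.Ioi (0 : ℝ)) := by
    intro k
    have hs : (-1 : ℝ) < 2 * (k : ℝ) + ν + a - 1 / 2 := by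
      have : (0:ℝ) ≤ (k:ℝ) := Nat.cast_nonneg k
      linarith
    exact (integrableOn_rpow_mul_exp_neg_mul_sq hc hs).const_mul _
  have hfnn : ∀ k : ℕ, ∀ y ∈ Set.Ioi (0 : ℝ), 0 ≤ f k y := by
    intro k y hy
    have hy0 : (0:ℝ) < y := hy
    have h1 := (hGν k).le
    rw [hfdef]
    positivity
  -- Step C : swap integral and sum
  have htop : ∑' k : ℕ, (∫⁻ y in Set.Ioi (0 : ℝ), ‖f k y‖₊) ≠ ⊤ := by
    have heq : ∀ k : ℕ, (∫⁻ y in Set.Ioi (0 : ℝ), ‖f k y‖₊)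
        = ENNReal.ofReal (∫ y in Set.Ioi (0 : ℝ), f k y) := by
      intro k
      have h1 : (∫⁻ y in Set.Ioi (0 : ℝ), ‖f k y‖₊)
          = ∫⁻ y in Set.Ioi (0 : ℝ), ENNReal.ofReal (f k y) :=
        lintegral_congr_ae ((ae_restrict_iff' measurableSet_Ioi).2
          (Filter.Eventually.of_forall fun y hy => Real.enorm_eq_ofReal (hfnn k y hy)))
      rw [h1, ← ofReal_integral_eq_lintegral_ofReal (hInt k)
        (((ae_restrict_iff' measurableSet_Ioi).2 (Filter.Eventually.of_forall (hfnn k))))]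
    simp_rw [heq, hIval]
    rw [← ENNReal.ofReal_tsum_of_nonneg (fun k => ?_) (hsum.mul_left K)]
    · exact ENNReal.ofReal_ne_top
    · have hPν : 0 < ∏ i ∈ Finset.range k, (ν + (i : ℝ)) :=
        Finset.prod_pos fun i _ => by positivity
      have hPα : 0 ≤ ∏ i ∈ Finset.range k, (α + (i : ℝ)) :=
        Finset.prod_nonneg fun i _ => by positivity
      have hK0 : 0 ≤ K := by
        rw [hK]
        have := Real.Gamma_pos_of_pos hα0
        have := Real.Gamma_pos_of_pos hν0
        positivity
      positivity
  calc (∫ y in Set.Ioi (0 : ℝ), Real.exp (-lam * y ^ 2) * p y)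
      = ∫ y in Set.Ioi (0 : ℝ), ∑' k, f k y :=
        setIntegral_congr_fun measurableSet_Ioi hpt
    _ = ∑' k, ∫ y in Set.Ioi (0 : ℝ), f k y := integral_tsum hmeas htop
    _ = ∑' k, K * (((∏ i ∈ Finset.range k, (α + (i : ℝ)))
            / (∏ i ∈ Finset.range k, (ν + (i : ℝ))))
          * z ^ k / (Nat.factorial k : ℝ)) := tsum_congr hIval
    _ = K * hyp1F1 α ν z := tsum_mul_left
    _ = Real.exp (-x ^ 2 / (2 * t)) * (x ^ 2 / (2 * t)) ^ ((2 * ν - 2 * a - 1) / 4)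
        * (Real.Gamma α * hyp1F1 α ν (x ^ 2 / (2 * t + 4 * t ^ 2 * lam)))
          / (Real.Gamma ν * (1 + 2 * t * lam) ^ α) := by
        rw [hK, ← hzdef]; ring
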